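/- Let S and S′ be real symmetric p×p matrices and λ > 0. Let Θ̂ be the minimizer of Θ ↦ −log det Θ + tr(SΘ) + λ‖Θ‖_F² over symmetric positive definite matrices, and let Θ̂′ be the minimizer of the same objective with S replaced by S′. Then ‖Θ̂′ − Θ̂‖_F ≤ max{‖Θ̂‖₂², ‖Θ̂′‖₂²} · ‖S′ − S‖_F, where ‖·‖₂ denotes the spectral norm (largest singular value). -/

import Mathlib

open scoped Matrix

/-- The Frobenius norm of a real matrix: the square root of the sum of the
squares of the entries. -/
noncomputable def frobNorm {p q : ℕ} (A : Matrix (Fin p) (Fin q) ℝ) : ℝ :=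
  Real.sqrt (∑ i, ∑ j, (A i j) ^ 2)

/-- The spectral norm (largest singular value) of a real square matrix:
the supremum of `‖Av‖₂` over unit vectors `v`. -/
noncomputable def specNorm {p : ℕ} (A : Matrix (Fin p) (Fin p) ℝ) : ℝ :=
  sSup {r : ℝ | ∃ v : Fin p → ℝ, (∑ i, (v i) ^ 2) = 1 ∧
    r = Real.sqrt (∑ i, (A.mulVec v i) ^ 2)}

/-- The ridge-penalized negative log-likelihood with sample covariance `S` and
tuning parameter `lam`. -/
noncomputable def ridgeObj {p : ℕ} (S : Matrix (Fin p) (Fin p) ℝ) (lam : ℝ)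
    (Θ : Matrix (Fin p) (Fin p) ℝ) : ℝ :=
  -Real.log Θ.det + (S * Θ).trace + lam * ∑ i, ∑ j, (Θ i j) ^ 2

namespace Stmt4Aux

open Matrix

variable {p : ℕ}

open scoped MatrixOrder in
lemma exists_sqrt' {Y : Matrix (Fin p) (Fin p) ℝ} (hY : Y.PosSemidef) :
    ∃ R : Matrix (Fin p) (Fin p) ℝ, R.PosSemidef ∧ R * R = Y :=
  ⟨CFC.sqrt Y, Matrix.nonneg_iff_posSemidef.mp (CFC.sqrt_nonneg Y),
    CFC.sqrt_mul_sqrt_self Y hY.nonneg⟩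

lemma trace_nonneg_of_posSemidef {X : Matrix (Fin p) (Fin p) ℝ} (hX : X.PosSemidef) :
    0 ≤ X.trace := by
  have h : ∀ i, 0 ≤ X i i := by
    intro i
    have := hX.dotProduct_mulVec_nonneg (Pi.single i 1)
    simpa [dotProduct, Matrix.mulVec, Pi.single_apply] using this
  exact Finset.sum_nonneg fun i _ => h i

lemma trace_mul_nonneg {X Y : Matrix (Fin p) (Fin p) ℝ} (hX : X.PosSemidef)
    (hY : Y.PosSemidef) : 0 ≤ (X * Y).trace := by
  obtain ⟨R, hs, hRR⟩ := exists_sqrt' hY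
  have h1 : X * Y = X * R * R := by rw [Matrix.mul_assoc, hRR]
  have h2 : (X * R * R).trace = (R * X * R).trace := by
    rw [Matrix.trace_mul_cycle]
  have h3 : (R * X * Rᴴ).PosSemidef := hX.mul_mul_conjTranspose_same R
  rw [hs.isHermitian.eq] at h3
  rw [h1, h2]
  exact trace_nonneg_of_posSemidef h3

lemma trace_eq_sum_eigenvalues {C : Matrix (Fin p) (Fin p) ℝ} (hC : C.IsHermitian) :
    C.trace = ∑ i, hC.eigenvalues i := by
  conv_lhs => rw [hC.spectral_theorem]
  simp only [Unitary.conjStarAlgAut_apply, Unitary.coe_star]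
  rw [Matrix.trace_mul_cycle]
  have h1 : (star (hC.eigenvectorUnitary : Matrix (Fin p) (Fin p) ℝ)) *
      (hC.eigenvectorUnitary : Matrix (Fin p) (Fin p) ℝ) = 1 :=
    Unitary.star_mul_self_of_mem hC.eigenvectorUnitary.2
  rw [h1, Matrix.one_mul]
  simp [Matrix.trace_diagonal]

lemma log_det_le_trace {C : Matrix (Fin p) (Fin p) ℝ} (hC : C.PosSemidef)
    (hdet : 0 < C.det) : Real.log C.det ≤ C.trace - p := by
  have hH := hC.isHermitian
  have hev : ∀ i, 0 ≤ hH.eigenvalues i := hC.eigenvalues_nonneg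
  have hdet' : C.det = ∏ i, hH.eigenvalues i := by
    simpa using hH.det_eq_prod_eigenvalues
  have hpos : ∀ i ∈ Finset.univ, 0 < hH.eigenvalues i := by
    intro i _
    rcases lt_or_eq_of_le (hev i) with h | h
    · exact h
    · exfalso
      rw [hdet'] at hdet
      have : (∏ j, hH.eigenvalues j) = 0 :=
        Finset.prod_eq_zero (Finset.mem_univ i) h.symm
      linarith
  rw [hdet', Real.log_prod (fun i hi => (hpos i hi).ne'),
    trace_eq_sum_eigenvalues hH]
  have : ∀ i ∈ Finset.univ, Real.log (hH.eigenvalues i) ≤ hH.eigenvalues i - 1 :=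
    fun i hi => Real.log_le_sub_one_of_pos (hpos i hi)
  calc ∑ i, Real.log (hH.eigenvalues i) ≤ ∑ i : Fin p, (hH.eigenvalues i - 1) :=
        Finset.sum_le_sum this
    _ = (∑ i, hH.eigenvalues i) - p := by
        rw [Finset.sum_sub_distrib]; simp

lemma logdet_grad_ineq {A B : Matrix (Fin p) (Fin p) ℝ} (hA : A.PosDef) (hB : B.PosDef) :
    Real.log A.det - Real.log B.det ≤ (B⁻¹ * A).trace - p := by
  have hBinv : (B⁻¹).PosDef := hB.inv
  obtain ⟨R, hR, hRR⟩ := exists_sqrt' hBinv.posSemidef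
  set C := R * A * R with hCdef
  have hCpsd : C.PosSemidef := by
    have := hA.posSemidef.mul_mul_conjTranspose_same R
    rwa [hR.isHermitian.eq] at this
  have hdetR : R.det * R.det = B.det⁻¹ := by
    rw [← Matrix.det_mul, hRR, Matrix.det_nonsing_inv, Ring.inverse_eq_inv']
  have hdetC : C.det = A.det * B.det⁻¹ := by
    rw [hCdef, Matrix.det_mul, Matrix.det_mul]
    rw [← hdetR]; ring
  have hdetCpos : 0 < C.det := by
    rw [hdetC]
    exact mul_pos hA.det_pos (inv_pos.mpr hB.det_pos)
  have htrC : C.trace = (B⁻¹ * A).trace := by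
    rw [hCdef, Matrix.trace_mul_cycle, hRR]
  have h := log_det_le_trace hCpsd hdetCpos
  rw [hdetC, Real.log_mul hA.det_pos.ne' (inv_pos.mpr hB.det_pos).ne', Real.log_inv,
    htrC] at h
  linarith

lemma posSemidef_smul {A : Matrix (Fin p) (Fin p) ℝ} (hA : A.PosSemidef) {c : ℝ}
    (hc : 0 ≤ c) : (c • A).PosSemidef := by
  constructor
  · show (c • A)ᴴ = c • A
    rw [Matrix.conjTranspose_smul, hA.isHermitian.eq, star_trivial]
  · exact (hA.smul hc).2

lemma posDef_smul {A : Matrix (Fin p) (Fin p) ℝ} (hA : A.PosDef) {c : ℝ}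
    (hc : 0 < c) : (c • A).PosDef := by
  constructor
  · show (c • A)ᴴ = c • A
    rw [Matrix.conjTranspose_smul, hA.isHermitian.eq, star_trivial]
  · exact (hA.smul hc).2

lemma posDef_segment {A B : Matrix (Fin p) (Fin p) ℝ} (hA : A.PosDef) (hB : B.PosDef)
    {t : ℝ} (ht0 : 0 < t) (ht1 : t ≤ 1) : (A + t • (B - A)).PosDef := by
  have h : A + t • (B - A) = t • B + (1 - t) • A := by
    rw [smul_sub]; module
  rw [h]
  exact (posDef_smul hB ht0).add_posSemidef (posSemidef_smul hA.posSemidef (by linarith))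

lemma foc (S A B : Matrix (Fin p) (Fin p) ℝ) (lam : ℝ)
    (hA : A.PosDef) (hB : B.PosDef)
    (hmin : ∀ Θ : Matrix (Fin p) (Fin p) ℝ, Θ.PosDef →
      ridgeObj S lam A ≤ ridgeObj S lam Θ) :
    (A⁻¹ * (B - A)).trace ≤
      (S * (B - A)).trace + 2 * lam * ∑ i, ∑ j, A i j * (B - A) i j := by
  set D := B - A with hD
  have key : ∀ t : ℝ, t ∈ Set.Ioc (0:ℝ) 1 →
      ((A + t • D)⁻¹ * D).trace ≤
        (S * D).trace + 2 * lam * (∑ i, ∑ j, A i j * D i j)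
          + lam * t * (∑ i, ∑ j, D i j ^ 2) := by
    rintro t ⟨ht0, ht1⟩
    set Z := A + t • D with hZ
    have hZpd : Z.PosDef := posDef_segment hA hB ht0 ht1
    have hmin' := hmin Z hZpd
    have hdetZ : IsUnit Z.det := (Matrix.isUnit_iff_isUnit_det Z).mp hZpd.isUnit
    have htr : (S * Z).trace = (S * A).trace + t * (S * D).trace := by
      rw [hZ, Matrix.mul_add, Matrix.mul_smul, Matrix.trace_add, Matrix.trace_smul,
        smul_eq_mul]
    have hsq : (∑ i, ∑ j, Z i j ^ 2) = (∑ i, ∑ j, A i j ^ 2)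
        + 2 * t * (∑ i, ∑ j, A i j * D i j) + t ^ 2 * (∑ i, ∑ j, D i j ^ 2) := by
      have hent : ∀ i j, Z i j ^ 2 = A i j ^ 2 + 2 * t * (A i j * D i j)
          + t ^ 2 * D i j ^ 2 := by
        intro i j
        simp only [hZ, Matrix.add_apply, Matrix.smul_apply, smul_eq_mul]
        ring
      simp_rw [hent, Finset.sum_add_distrib, ← Finset.mul_sum]
    have hlog : Real.log A.det - Real.log Z.det ≤ -(t * ((Z⁻¹ * D).trace)) := by
      have h := logdet_grad_ineq hA hZpd
      have hZA : (Z⁻¹ * A).trace = (p : ℝ) - t * (Z⁻¹ * D).trace := by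
        have hAZ : A = Z - t • D := by rw [hZ]; abel
        rw [hAZ, Matrix.mul_sub, Matrix.mul_smul, Matrix.trace_sub, Matrix.trace_smul,
          Matrix.nonsing_inv_mul Z hdetZ, Matrix.trace_one, smul_eq_mul]
        simp
      rw [hZA] at h
      linarith
    have hexp : 0 ≤ (Real.log A.det - Real.log Z.det) + t * (S * D).trace
        + lam * (2 * t * (∑ i, ∑ j, A i j * D i j) + t ^ 2 * (∑ i, ∑ j, D i j ^ 2)) := by
      have e1 : ridgeObj S lam Z - ridgeObj S lam A
          = (Real.log A.det - Real.log Z.det) + t * (S * D).trace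
            + lam * (2 * t * (∑ i, ∑ j, A i j * D i j)
              + t ^ 2 * (∑ i, ∑ j, D i j ^ 2)) := by
        simp only [ridgeObj, htr, hsq]; ring
      linarith
    have h2 : t * ((Z⁻¹ * D).trace) ≤ t * ((S * D).trace
        + 2 * lam * (∑ i, ∑ j, A i j * D i j) + lam * t * (∑ i, ∑ j, D i j ^ 2)) := by
      nlinarith [hexp, hlog]
    exact (mul_le_mul_iff_right₀ ht0).mp h2
  have hcont : ContinuousAt (fun t : ℝ => ((A + t • D)⁻¹ * D).trace) 0 := by
    have h1 : Continuous fun t : ℝ => A + t • D := by continuity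
    have h2 : ContinuousAt Inv.inv (A + (0:ℝ) • D) := by
      apply continuousAt_matrix_inv
      have : (A + (0:ℝ) • D).det = A.det := by simp
      rw [this, Ring.inverse_eq_inv']
      exact continuousAt_inv₀ hA.det_pos.ne'
    have h3 : Continuous fun M : Matrix (Fin p) (Fin p) ℝ => (M * D).trace :=
      (continuous_id.matrix_mul continuous_const).matrix_trace
    have h4 : ContinuousAt (fun t : ℝ => (A + t • D)⁻¹) 0 :=
      ContinuousAt.comp (g := Inv.inv) h2 h1.continuousAt
    exact ContinuousAt.comp (g := fun M : Matrix (Fin p) (Fin p) ℝ => (M * D).trace)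
      h3.continuousAt h4
  have hG : Filter.Tendsto (fun t : ℝ => ((A + t • D)⁻¹ * D).trace)
      (nhdsWithin 0 (Set.Ioi 0)) (nhds ((A⁻¹ * D).trace)) := by
    have h := hcont.tendsto
    simp only [zero_smul, add_zero] at h
    exact h.mono_left nhdsWithin_le_nhds
  have hRt : Filter.Tendsto (fun t : ℝ => (S * D).trace
      + 2 * lam * (∑ i, ∑ j, A i j * D i j) + lam * t * (∑ i, ∑ j, D i j ^ 2))
      (nhdsWithin 0 (Set.Ioi 0))
      (nhds ((S * D).trace + 2 * lam * (∑ i, ∑ j, A i j * D i j))) := by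
    have h : Continuous fun t : ℝ => (S * D).trace
        + 2 * lam * (∑ i, ∑ j, A i j * D i j) + lam * t * (∑ i, ∑ j, D i j ^ 2) := by
      continuity
    have h0 := (h.continuousAt (x := (0:ℝ))).tendsto
    simp only [mul_zero, zero_mul, add_zero] at h0
    exact h0.mono_left nhdsWithin_le_nhds
  have hev : ∀ᶠ t in nhdsWithin (0:ℝ) (Set.Ioi 0), ((A + t • D)⁻¹ * D).trace
      ≤ (S * D).trace + 2 * lam * (∑ i, ∑ j, A i j * D i j)
        + lam * t * (∑ i, ∑ j, D i j ^ 2) := by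
    filter_upwards [Ioc_mem_nhdsGT_of_mem ⟨le_refl (0:ℝ), zero_lt_one⟩] with t ht
    exact key t ht
  exact le_of_tendsto_of_tendsto hG hRt hev

lemma specSet_bddAbove (A : Matrix (Fin p) (Fin p) ℝ) :
    BddAbove {r : ℝ | ∃ v : Fin p → ℝ, (∑ i, (v i) ^ 2) = 1 ∧
      r = Real.sqrt (∑ i, (A.mulVec v i) ^ 2)} := by
  refine ⟨Real.sqrt (∑ i, ∑ j, A i j ^ 2), ?_⟩
  rintro r ⟨v, hv, rfl⟩
  apply Real.sqrt_le_sqrt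
  have h : ∀ i, (A.mulVec v i) ^ 2 ≤ ∑ j, A i j ^ 2 := by
    intro i
    have hcs := Finset.sum_mul_sq_le_sq_mul_sq Finset.univ (fun j => A i j) v
    simp only [Matrix.mulVec, dotProduct]
    calc (∑ j, A i j * v j) ^ 2 ≤ (∑ j, A i j ^ 2) * ∑ j, v j ^ 2 := hcs
      _ = ∑ j, A i j ^ 2 := by rw [hv, mul_one]
  exact Finset.sum_le_sum fun i _ => h i

lemma eigenvalue_le_specNorm {A : Matrix (Fin p) (Fin p) ℝ}
    (hA : A.IsHermitian) (i : Fin p) :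
    hA.eigenvalues i ≤ specNorm A := by
  set v : Fin p → ℝ := ⇑(hA.eigenvectorBasis i) with hv
  have hnorm : ‖hA.eigenvectorBasis i‖ = 1 := hA.eigenvectorBasis.orthonormal.1 i
  have hsum : (∑ j, (v j) ^ 2) = 1 := by
    have := EuclideanSpace.norm_eq (hA.eigenvectorBasis i)
    rw [hnorm] at this
    have h2 : Real.sqrt (∑ j, ‖hA.eigenvectorBasis i j‖ ^ 2) = 1 := this.symm
    have h3 : (∑ j, ‖hA.eigenvectorBasis i j‖ ^ 2) = 1 := by
      have := congrArg (· ^ 2) h2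
      simpa [Real.sq_sqrt (Finset.sum_nonneg fun j _ => sq_nonneg _)] using this
    simpa [Real.norm_eq_abs, sq_abs] using h3
  have hmul : A.mulVec v = hA.eigenvalues i • v := hA.mulVec_eigenvectorBasis i
  have hval : Real.sqrt (∑ j, (A.mulVec v j) ^ 2) = |hA.eigenvalues i| := by
    rw [hmul]
    simp only [Pi.smul_apply, smul_eq_mul, mul_pow]
    rw [← Finset.mul_sum, hsum, mul_one, Real.sqrt_sq_eq_abs]
  have hmem : |hA.eigenvalues i| ∈ {r : ℝ | ∃ v : Fin p → ℝ, (∑ i, (v i) ^ 2) = 1 ∧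
      r = Real.sqrt (∑ i, (A.mulVec v i) ^ 2)} := ⟨v, hsum, hval.symm⟩
  calc hA.eigenvalues i ≤ |hA.eigenvalues i| := le_abs_self _
    _ ≤ specNorm A := le_csSup (specSet_bddAbove A) hmem

lemma specNorm_pos [NeZero p] {A : Matrix (Fin p) (Fin p) ℝ} (hA : A.PosDef) :
    0 < specNorm A := by
  have i : Fin p := ⟨0, Nat.pos_of_ne_zero (NeZero.ne p)⟩
  calc (0:ℝ) < hA.isHermitian.eigenvalues i := hA.eigenvalues_pos i
    _ ≤ specNorm A := eigenvalue_le_specNorm hA.isHermitian i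

lemma inv_sub_smul_posSemidef [NeZero p] {A : Matrix (Fin p) (Fin p) ℝ} (hA : A.PosDef) :
    (A⁻¹ - (specNorm A)⁻¹ • (1 : Matrix (Fin p) (Fin p) ℝ)).PosSemidef := by
  set m := specNorm A with hm
  have hmpos : 0 < m := specNorm_pos hA
  have hH := hA.isHermitian
  set U : Matrix (Fin p) (Fin p) ℝ := (hH.eigenvectorUnitary : Matrix (Fin p) (Fin p) ℝ) with hU
  have hUU : U * star U = 1 := Unitary.mul_star_self_of_mem hH.eigenvectorUnitary.2
  have hUU' : star U * U = 1 := Unitary.star_mul_self_of_mem hH.eigenvectorUnitary.2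
  obtain ⟨ev, hev⟩ : ∃ ev : Fin p → ℝ, ev = hH.eigenvalues := ⟨_, rfl⟩
  have hspec : A = U * Matrix.diagonal ev * star U := by
    rw [hev]
    simpa using hH.spectral_theorem
  have hevpos : ∀ i, 0 < ev i := by rw [hev]; exact hA.eigenvalues_pos
  have hevle : ∀ i, ev i ≤ m := by rw [hev]; exact fun i => eigenvalue_le_specNorm hH i
  clear hev
  have hinv : A⁻¹ = U * Matrix.diagonal (fun i => (ev i)⁻¹) * star U := by
    apply Matrix.inv_eq_right_inv
    rw [hspec]
    calc U * Matrix.diagonal ev * star U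
          * (U * Matrix.diagonal (fun i => (ev i)⁻¹) * star U)
        = U * Matrix.diagonal ev * (star U * U)
          * Matrix.diagonal (fun i => (ev i)⁻¹) * star U := by
          noncomm_ring
      _ = U * (Matrix.diagonal ev
          * Matrix.diagonal (fun i => (ev i)⁻¹)) * star U := by
          rw [hUU']; noncomm_ring
      _ = 1 := by
          rw [Matrix.diagonal_mul_diagonal]
          have : (fun i => ev i * (ev i)⁻¹) = fun _ => (1:ℝ) := by
            funext i; exact mul_inv_cancel₀ (hevpos i).ne'
          rw [this, Matrix.diagonal_one, Matrix.mul_one, hUU]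
  have hone : (m⁻¹ : ℝ) • (1 : Matrix (Fin p) (Fin p) ℝ)
      = U * Matrix.diagonal (fun _ => m⁻¹) * star U := by
    have h1 : (fun _ : Fin p => m⁻¹) = m⁻¹ • (fun _ : Fin p => (1:ℝ)) := by
      funext i; simp
    rw [h1, Matrix.diagonal_smul, Matrix.diagonal_one, Matrix.mul_smul, Matrix.smul_mul,
      Matrix.mul_one, hUU]
  have hdiff : A⁻¹ - (m⁻¹ : ℝ) • (1 : Matrix (Fin p) (Fin p) ℝ)
      = U * Matrix.diagonal (fun i => (ev i)⁻¹ - m⁻¹) * star U := by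
    rw [hinv, hone]
    have h2 : Matrix.diagonal (fun i => (ev i)⁻¹ - m⁻¹)
        = Matrix.diagonal (fun i => (ev i)⁻¹) - Matrix.diagonal (fun _ => m⁻¹) := by
      rw [Matrix.diagonal_sub]
    rw [h2, Matrix.mul_sub, Matrix.sub_mul]
  rw [hdiff]
  have hd : (Matrix.diagonal (fun i => (ev i)⁻¹ - m⁻¹)).PosSemidef := by
    rw [Matrix.posSemidef_diagonal_iff]
    intro i
    have h1 : ev i ≤ m := hevle i
    have := inv_anti₀ (hevpos i) h1
    linarith
  have := hd.mul_mul_conjTranspose_same U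
  simpa [Matrix.star_eq_conjTranspose] using this

lemma trace_formula (A B : Matrix (Fin p) (Fin p) ℝ) :
    (A * B).trace = ∑ i, ∑ j, A i j * B j i := by
  simp [Matrix.trace, Matrix.mul_apply, Matrix.diag]

lemma trace_lower_bound [NeZero p] {A A' Δ : Matrix (Fin p) (Fin p) ℝ}
    (hA : A.PosDef) (hA' : A'.PosDef) (hΔ : Δᴴ = Δ) :
    (specNorm A)⁻¹ * (specNorm A')⁻¹ * (∑ i, ∑ j, Δ i j ^ 2)
      ≤ (A⁻¹ * Δ * A'⁻¹ * Δ).trace := by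
  set m := specNorm A
  set m' := specNorm A'
  have hm : 0 < m := specNorm_pos hA
  have hm' : 0 < m' := specNorm_pos hA'
  have hQ : (A'⁻¹).PosSemidef := hA'.inv.posSemidef
  have hP1 : (Δ * A'⁻¹ * Δ).PosSemidef := by
    have := hQ.mul_mul_conjTranspose_same Δ
    rwa [hΔ] at this
  have hP2 : (Δ * Δ).PosSemidef := by
    have := Matrix.posSemidef_self_mul_conjTranspose Δ
    rwa [hΔ] at this
  have hΔsum : (Δ * Δ).trace = ∑ i, ∑ j, Δ i j ^ 2 := by
    rw [trace_formula]
    have hsym : ∀ i j, Δ j i = Δ i j := by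
      intro i j
      have := congrFun (congrFun hΔ j) i
      simpa [Matrix.conjTranspose_apply] using this.symm
    refine Finset.sum_congr rfl fun i _ => Finset.sum_congr rfl fun j _ => ?_
    rw [hsym i j]; ring
  -- step 2 : m'⁻¹ * (Δ*Δ).trace ≤ (Δ * A'⁻¹ * Δ).trace
  have step2 : m'⁻¹ * (Δ * Δ).trace ≤ (Δ * A'⁻¹ * Δ).trace := by
    have h0 := trace_mul_nonneg (inv_sub_smul_posSemidef hA') hP2
    have hexp : (A'⁻¹ - (m'⁻¹ : ℝ) • (1 : Matrix (Fin p) (Fin p) ℝ)) * (Δ * Δ)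
        = A'⁻¹ * (Δ * Δ) - (m'⁻¹ : ℝ) • (Δ * Δ) := by
      rw [Matrix.sub_mul, Matrix.smul_mul, Matrix.one_mul]
    rw [hexp, Matrix.trace_sub, Matrix.trace_smul, smul_eq_mul] at h0
    have hcyc : (A'⁻¹ * (Δ * Δ)).trace = (Δ * A'⁻¹ * Δ).trace := by
      rw [← Matrix.mul_assoc, Matrix.trace_mul_cycle]
    linarith
  -- step 1 : m⁻¹ * (Δ * A'⁻¹ * Δ).trace ≤ (A⁻¹ * Δ * A'⁻¹ * Δ).trace
  have step1 : m⁻¹ * (Δ * A'⁻¹ * Δ).trace ≤ (A⁻¹ * Δ * A'⁻¹ * Δ).trace := by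
    have h0 := trace_mul_nonneg (inv_sub_smul_posSemidef hA) hP1
    have hexp : (A⁻¹ - (m⁻¹ : ℝ) • (1 : Matrix (Fin p) (Fin p) ℝ)) * (Δ * A'⁻¹ * Δ)
        = A⁻¹ * (Δ * A'⁻¹ * Δ) - (m⁻¹ : ℝ) • (Δ * A'⁻¹ * Δ) := by
      rw [Matrix.sub_mul, Matrix.smul_mul, Matrix.one_mul]
    rw [hexp, Matrix.trace_sub, Matrix.trace_smul, smul_eq_mul] at h0
    have hassoc : A⁻¹ * (Δ * A'⁻¹ * Δ) = A⁻¹ * Δ * A'⁻¹ * Δ := by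
      noncomm_ring
    rw [hassoc] at h0
    linarith
  have htrpos : 0 ≤ (Δ * A'⁻¹ * Δ).trace := trace_nonneg_of_posSemidef hP1
  calc m⁻¹ * m'⁻¹ * (∑ i, ∑ j, Δ i j ^ 2)
      = m⁻¹ * (m'⁻¹ * (Δ * Δ).trace) := by rw [hΔsum]; ring
    _ ≤ m⁻¹ * (Δ * A'⁻¹ * Δ).trace :=
        mul_le_mul_of_nonneg_left step2 (inv_pos.mpr hm).le
    _ ≤ (A⁻¹ * Δ * A'⁻¹ * Δ).trace := step1

lemma trace_cauchy_schwarz (E Δ : Matrix (Fin p) (Fin p) ℝ) :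
    -((E * Δ).trace) ≤ Real.sqrt (∑ i, ∑ j, E i j ^ 2) * Real.sqrt (∑ i, ∑ j, Δ i j ^ 2) := by
  have htr : (E * Δ).trace = ∑ ij : Fin p × Fin p, E ij.1 ij.2 * Δ ij.2 ij.1 := by
    rw [trace_formula, ← Finset.sum_product']
    rfl
  have hcs := Finset.sum_mul_sq_le_sq_mul_sq Finset.univ
    (fun ij : Fin p × Fin p => E ij.1 ij.2) (fun ij : Fin p × Fin p => Δ ij.2 ij.1)
  have hE : (∑ ij : Fin p × Fin p, E ij.1 ij.2 ^ 2) = ∑ i, ∑ j, E i j ^ 2 := by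
    rw [← Finset.sum_product']; rfl
  have hΔ2 : (∑ ij : Fin p × Fin p, Δ ij.2 ij.1 ^ 2) = ∑ i, ∑ j, Δ i j ^ 2 := by
    calc (∑ ij : Fin p × Fin p, Δ ij.2 ij.1 ^ 2) = ∑ i, ∑ j, Δ j i ^ 2 := by
          rw [← Finset.sum_product']; rfl
      _ = ∑ i, ∑ j, Δ i j ^ 2 := Finset.sum_comm
  have h1 : ((E * Δ).trace) ^ 2 ≤ (∑ i, ∑ j, E i j ^ 2) * (∑ i, ∑ j, Δ i j ^ 2) := by
    rw [htr, ← hE, ← hΔ2]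
    exact hcs
  have hEnn : 0 ≤ ∑ i, ∑ j, E i j ^ 2 :=
    Finset.sum_nonneg fun i _ => Finset.sum_nonneg fun j _ => sq_nonneg _
  calc -((E * Δ).trace) ≤ |(E * Δ).trace| := neg_le_abs _
    _ = Real.sqrt (((E * Δ).trace) ^ 2) := (Real.sqrt_sq_eq_abs _).symm
    _ ≤ Real.sqrt ((∑ i, ∑ j, E i j ^ 2) * (∑ i, ∑ j, Δ i j ^ 2)) := Real.sqrt_le_sqrt h1
    _ = Real.sqrt (∑ i, ∑ j, E i j ^ 2) * Real.sqrt (∑ i, ∑ j, Δ i j ^ 2) :=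
        Real.sqrt_mul hEnn _
end Stmt4Aux

/-- If `Θ̂` and `Θ̂′` are minimizers of the ridge-penalized
negative log-likelihood with inputs `S` and `S′` respectively, then
`‖Θ̂′ − Θ̂‖_F ≤ max {‖Θ̂‖₂², ‖Θ̂′‖₂²} ‖S′ − S‖_F`. -/
theorem stmt4 {p : ℕ} (S S' : Matrix (Fin p) (Fin p) ℝ) (hS : Sᵀ = S) (hS' : S'ᵀ = S')
    (lam : ℝ) (hlam : 0 < lam) (Θhat Θhat' : Matrix (Fin p) (Fin p) ℝ)
    (hΘhat : Θhat.PosDef ∧ ∀ Θ : Matrix (Fin p) (Fin p) ℝ, Θ.PosDef →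
      ridgeObj S lam Θhat ≤ ridgeObj S lam Θ)
    (hΘhat' : Θhat'.PosDef ∧ ∀ Θ : Matrix (Fin p) (Fin p) ℝ, Θ.PosDef →
      ridgeObj S' lam Θhat' ≤ ridgeObj S' lam Θ) :
    frobNorm (Θhat' - Θhat) ≤
      max (specNorm Θhat ^ 2) (specNorm Θhat' ^ 2) * frobNorm (S' - S) := by
  obtain ⟨hApd, hAmin⟩ := hΘhat
  obtain ⟨hBpd, hBmin⟩ := hΘhat'
  rcases Nat.eq_zero_or_pos p with hp | hp
  · subst hp
    have hL : frobNorm (Θhat' - Θhat) = 0 := by simp [frobNorm]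
    rw [hL]
    exact mul_nonneg (le_trans (sq_nonneg (specNorm Θhat)) (le_max_left _ _))
      (Real.sqrt_nonneg _)
  · haveI : NeZero p := ⟨hp.ne'⟩
    set Δ := Θhat' - Θhat with hΔdef
    set E := S' - S with hEdef
    set m := specNorm Θhat with hmdef
    set m' := specNorm Θhat' with hm'def
    have hm : 0 < m := Stmt4Aux.specNorm_pos hApd
    have hm' : 0 < m' := Stmt4Aux.specNorm_pos hBpd
    have hΔherm : Δᴴ = Δ := by
      rw [hΔdef, Matrix.conjTranspose_sub, hBpd.isHermitian.eq, hApd.isHermitian.eq]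
    have h1 := Stmt4Aux.foc S Θhat Θhat' lam hApd hBpd hAmin
    rw [← hΔdef] at h1
    have h2 := Stmt4Aux.foc S' Θhat' Θhat lam hBpd hApd hBmin
    rw [show Θhat - Θhat' = -Δ by rw [hΔdef]; abel] at h2
    have e1 : (Θhat'⁻¹ * -Δ).trace = -((Θhat'⁻¹ * Δ).trace) := by
      rw [Matrix.mul_neg, Matrix.trace_neg]
    have e2 : (S' * -Δ).trace = -((S' * Δ).trace) := by
      rw [Matrix.mul_neg, Matrix.trace_neg]
    have e3 : (∑ i, ∑ j, Θhat' i j * (-Δ) i j) = -∑ i, ∑ j, Θhat' i j * Δ i j := by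
      simp [Matrix.neg_apply, Finset.sum_neg_distrib]
    rw [e1, e2, e3] at h2
    -- resolvent identity
    have hUA : IsUnit Θhat.det := (Matrix.isUnit_iff_isUnit_det _).mp hApd.isUnit
    have hUB : IsUnit Θhat'.det := (Matrix.isUnit_iff_isUnit_det _).mp hBpd.isUnit
    have hres : Θhat⁻¹ * Δ * Θhat'⁻¹ = Θhat⁻¹ - Θhat'⁻¹ := by
      have hstep : Θhat⁻¹ * Δ = Θhat⁻¹ * Θhat' - 1 := by
        rw [hΔdef, Matrix.mul_sub, Matrix.nonsing_inv_mul _ hUA]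
      rw [hstep, Matrix.sub_mul, Matrix.one_mul, Matrix.mul_assoc,
        Matrix.mul_nonsing_inv _ hUB, Matrix.mul_one]
    have htr_id : (Θhat⁻¹ * Δ * Θhat'⁻¹ * Δ).trace
        = (Θhat⁻¹ * Δ).trace - (Θhat'⁻¹ * Δ).trace := by
      rw [hres, Matrix.sub_mul, Matrix.trace_sub]
    have hlow := Stmt4Aux.trace_lower_bound hApd hBpd hΔherm
    have hcs := Stmt4Aux.trace_cauchy_schwarz E Δ
    have hEtr : (E * Δ).trace = (S' * Δ).trace - (S * Δ).trace := by
      rw [hEdef, Matrix.sub_mul, Matrix.trace_sub]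
    have hsum : (∑ i, ∑ j, Θhat i j * Δ i j) - (∑ i, ∑ j, Θhat' i j * Δ i j)
        = -∑ i, ∑ j, Δ i j ^ 2 := by
      have hterm : ∀ i j, Θhat i j * Δ i j - Θhat' i j * Δ i j = -(Δ i j ^ 2) := by
        intro i j
        have : Δ i j = Θhat' i j - Θhat i j := by rw [hΔdef, Matrix.sub_apply]
        rw [this]; ring
      calc (∑ i, ∑ j, Θhat i j * Δ i j) - (∑ i, ∑ j, Θhat' i j * Δ i j)
          = ∑ i, ∑ j, (Θhat i j * Δ i j - Θhat' i j * Δ i j) := by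
            rw [← Finset.sum_sub_distrib]
            exact Finset.sum_congr rfl fun i _ => (Finset.sum_sub_distrib _ _).symm
        _ = -∑ i, ∑ j, Δ i j ^ 2 := by simp_rw [hterm, Finset.sum_neg_distrib]
    -- names for quantities
    set Q := ∑ i, ∑ j, Δ i j ^ 2 with hQdef
    have hQnn : 0 ≤ Q :=
      Finset.sum_nonneg fun i _ => Finset.sum_nonneg fun j _ => sq_nonneg _
    set N := Real.sqrt Q with hNdef
    set F := Real.sqrt (∑ i, ∑ j, E i j ^ 2) with hFdef
    have hN2 : N ^ 2 = Q := Real.sq_sqrt hQnn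
    have hNnn : 0 ≤ N := Real.sqrt_nonneg _
    have hFnn : 0 ≤ F := Real.sqrt_nonneg _
    -- key scalar inequality : m⁻¹ m'⁻¹ Q + 2 lam Q ≤ F * N
    rw [← hmdef, ← hm'def] at hlow
    have hkey : m⁻¹ * m'⁻¹ * Q + 2 * lam * Q ≤ F * N := by
      have hsum2 : 2 * lam * (∑ i, ∑ j, Θhat i j * Δ i j)
          - 2 * lam * (∑ i, ∑ j, Θhat' i j * Δ i j) = -(2 * lam * Q) := by
        linear_combination (2 * lam) * hsum
      have hsumineq : (Θhat⁻¹ * Δ).trace - (Θhat'⁻¹ * Δ).trace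
          ≤ -((E * Δ).trace) - 2 * lam * Q := by
        rw [hEtr]
        linarith [h1, h2, hsum2]
      have hlow' := htr_id ▸ hlow
      linarith [hcs, hlow', hsumineq]
    -- conclude
    show N ≤ max (m ^ 2) (m' ^ 2) * F
    rcases eq_or_lt_of_le hNnn with hN0 | hNpos
    · rw [← hN0]
      exact mul_nonneg (le_trans (sq_nonneg m) (le_max_left _ _)) hFnn
    · have hNle : N ≤ m * m' * F := by
        have hQN : m⁻¹ * m'⁻¹ * Q ≤ F * N := by
          have h9 : 0 ≤ 2 * lam * Q := by positivity
          linarith [hkey]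
        have h6 := mul_le_mul_of_nonneg_left hQN (le_of_lt (mul_pos hm hm'))
        have h7 : m * m' * (m⁻¹ * m'⁻¹ * Q) = Q := by
          field_simp
        rw [h7] at h6
        have h8 : N * N ≤ (m * m' * F) * N := by
          calc N * N = Q := by rw [← hN2]; ring
            _ ≤ m * m' * (F * N) := h6
            _ = (m * m' * F) * N := by ring
        exact le_of_mul_le_mul_right h8 hNpos
      have hmax : m * m' ≤ max (m ^ 2) (m' ^ 2) := by
        rcases le_total m m' with h | h
        · calc m * m' ≤ m' * m' := mul_le_mul_of_nonneg_right h hm'.le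
            _ = m' ^ 2 := by ring
            _ ≤ max (m ^ 2) (m' ^ 2) := le_max_right _ _
        · calc m * m' ≤ m * m := mul_le_mul_of_nonneg_left h hm.le
            _ = m ^ 2 := by ring
            _ ≤ max (m ^ 2) (m' ^ 2) := le_max_left _ _
      calc N ≤ m * m' * F := hNle
        _ ≤ max (m ^ 2) (m' ^ 2) * F := mul_le_mul_of_nonneg_right hmax hFnn
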